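/- (Special case of the theorem of the ramée: projection onto a line through one of the six points.) Let Δ be a line of ℝ² carrying six pairwise distinct points B, H, C, G, D, F satisfying Desargues' involution identity based on the couple (D,F), namely DG·DC·FB·FH = FG·FC·DB·DH. Let K be a point not on Δ, and let ℓ be a line through D, distinct from Δ and not passing through K, such that the lines KB, KH, KC, KG, KF meet ℓ in points b', h', c', g', f respectively, these five points being pairwise distinct and distinct from D. Then Db'·Dh'·fc'·fg' = fb'·fh'·Dc'·Dg'; that is, the points D, f; b', h'; c', g' satisfy the involution identity based on the couple (D,f). -/

import Mathlib

noncomputable section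

open EuclideanGeometry

abbrev Pt : Type := EuclideanSpace ℝ (Fin 2)

/-- The affine line through two points of the Euclidean plane. -/
def lineThrough (x y : Pt) : AffineSubspace ℝ Pt := affineSpan ℝ {x, y}

/-- A subset of the plane is a line if it is the affine span of two distinct points. -/
def IsLine (s : AffineSubspace ℝ Pt) : Prop := ∃ x y : Pt, x ≠ y ∧ s = lineThrough x y

lemma mem_lineThrough_iff (x y p : Pt) :
    p ∈ lineThrough x y ↔ ∃ r : ℝ, p = r • (y - x) + x := by
  unfold lineThrough
  constructor
  · intro h
    have h2 : (p - x) +ᵥ x ∈ affineSpan ℝ {x, y} := by simpa using h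
    rw [vadd_left_mem_affineSpan_pair] at h2
    obtain ⟨r, hr⟩ := h2
    exact ⟨r, by rw [vsub_eq_sub] at hr; rw [hr]; abel⟩
  · rintro ⟨r, rfl⟩
    have := smul_vsub_vadd_mem_affineSpan_pair (k := ℝ) r x y
    simpa using this

lemma two_dim_kernel (w a : Pt) (hw : w ≠ 0) (h : a 0 * w 1 - a 1 * w 0 = 0) :
    ∃ r : ℝ, a = r • w := by
  by_cases h0 : w 0 = 0
  · have h1 : w 1 ≠ 0 := by
      intro h1; apply hw; ext i; fin_cases i <;> simp [h0, h1]
    have ha0 : a 0 = 0 := by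
      have h' := h; rw [h0] at h'
      have : a 0 * w 1 = 0 := by linarith
      rcases mul_eq_zero.mp this with h'' | h''
      · exact h''
      · exact absurd h'' h1
    refine ⟨a 1 / w 1, ?_⟩
    ext i; fin_cases i <;> simp [PiLp.smul_apply, h0, ha0] <;> field_simp
  · refine ⟨a 0 / w 0, ?_⟩
    ext i; fin_cases i <;> simp [PiLp.smul_apply] <;> field_simp <;> nlinarith [h]

/-- Special case of the ramée: projection onto a line through one of the six points. -/
theorem ramee_special_case
    (B H C G D F : Pt)
    (hdist : List.Pairwise (· ≠ ·) [B, H, C, G, D, F])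
    (hcol : Collinear ℝ ({B, H, C, G, D, F} : Set Pt))
    (hinv : dist D G * dist D C * dist F B * dist F H
          = dist F G * dist F C * dist D B * dist D H)
    (K : Pt) (hK : K ∉ lineThrough B H)
    (ℓ : AffineSubspace ℝ Pt) (hℓ : IsLine ℓ)
    (hDℓ : D ∈ ℓ) (hℓΔ : ℓ ≠ lineThrough B H) (hKℓ : K ∉ ℓ)
    (b' h' c' g' f : Pt)
    (hb : b' ∈ lineThrough K B) (hbℓ : b' ∈ ℓ)
    (hh : h' ∈ lineThrough K H) (hhℓ : h' ∈ ℓ)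
    (hc : c' ∈ lineThrough K C) (hcℓ : c' ∈ ℓ)
    (hg : g' ∈ lineThrough K G) (hgℓ : g' ∈ ℓ)
    (hf : f ∈ lineThrough K F) (hfℓ : f ∈ ℓ)
    (hdist' : List.Pairwise (· ≠ ·) [D, b', h', c', g', f]) :
    dist D b' * dist D h' * dist f c' * dist f g'
      = dist f b' * dist f h' * dist D c' * dist D g' := by
  -- B ≠ H
  have hBH : B ≠ H := by
    simp only [List.pairwise_cons, List.mem_cons, List.not_mem_nil] at hdist
    exact hdist.1 H (by tauto)
  -- parametrize the six collinear points
  obtain ⟨v, hv⟩ := (collinear_iff_of_mem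
    (show B ∈ ({B, H, C, G, D, F} : Set Pt) by simp)).mp hcol
  obtain ⟨tB, htB⟩ := hv B (by simp)
  obtain ⟨tH, htH⟩ := hv H (by simp)
  obtain ⟨tC, htC⟩ := hv C (by simp)
  obtain ⟨tG, htG⟩ := hv G (by simp)
  obtain ⟨tD, htD⟩ := hv D (by simp)
  obtain ⟨tF, htF⟩ := hv F (by simp)
  simp only [vadd_eq_add] at htB htH htC htG htD htF
  have hvne : v ≠ 0 := by
    intro h0
    apply hBH
    rw [htB, htH, h0, smul_zero, smul_zero]
  have hnv : ‖v‖ ≠ 0 := norm_ne_zero_iff.mpr hvne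
  -- the line ℓ
  obtain ⟨x₀, y₀, hxy, rfl⟩ := hℓ
  set w : Pt := y₀ - x₀ with hw
  have hwne : w ≠ 0 := sub_ne_zero.mpr hxy.symm
  set φ : Pt → ℝ := fun p => p 0 * w 1 - p 1 * w 0 with hφ
  have phi_add : ∀ p q : Pt, φ (p + q) = φ p + φ q := by
    intro p q; simp [hφ, PiLp.add_apply]; ring
  have phi_smul : ∀ (r : ℝ) (p : Pt), φ (r • p) = r * φ p := by
    intro r p; simp [hφ, PiLp.smul_apply]; ring
  have memℓ : ∀ p : Pt, p ∈ lineThrough x₀ y₀ ↔ φ (p - x₀) = 0 := by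
    intro p
    rw [mem_lineThrough_iff]
    constructor
    · rintro ⟨r, rfl⟩
      have h1 : r • (y₀ - x₀) + x₀ - x₀ = r • w := by rw [hw]; abel
      have hφw : φ w = 0 := by simp only [hφ]; ring
      rw [h1, phi_smul, hφw, mul_zero]
    · intro h
      obtain ⟨r, hr⟩ := two_dim_kernel w (p - x₀) hwne h
      exact ⟨r, by rw [← hw, ← hr]; abel⟩
  -- the constant c0
  set c0 : ℝ := φ (K - x₀) with hc0def
  have hc0 : c0 ≠ 0 := by
    intro h
    exact hKℓ ((memℓ K).mpr h)
  -- projection formula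
  have key : ∀ X x' : Pt, x' ∈ lineThrough K X → x' ∈ lineThrough x₀ y₀ →
      φ (X - K) ≠ 0 ∧ x' - K = ((-c0) / φ (X - K)) • (X - K) := by
    intro X x' hx1 hx2
    rw [mem_lineThrough_iff] at hx1
    obtain ⟨s, rfl⟩ := hx1
    rw [memℓ] at hx2
    have heq : s • (X - K) + K - x₀ = s • (X - K) + (K - x₀) := by abel
    rw [heq, phi_add, phi_smul] at hx2
    have h2 : s * φ (X - K) = -c0 := by rw [hc0def]; linarith
    have hα : φ (X - K) ≠ 0 := by
      intro h0
      rw [h0, mul_zero] at h2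
      exact hc0 (by linarith)
    refine ⟨hα, ?_⟩
    have hs : s = (-c0) / φ (X - K) := by rw [eq_div_iff hα]; linarith
    rw [← hs]; abel
  obtain ⟨hαB, hbp⟩ := key B b' hb hbℓ
  obtain ⟨hαH, hhp⟩ := key H h' hh hhℓ
  obtain ⟨hαC, hcp⟩ := key C c' hc hcℓ
  obtain ⟨hαG, hgp⟩ := key G g' hg hgℓ
  obtain ⟨hαF, hfp⟩ := key F f hf hfℓ
  -- D projects to itself
  have hαDval : φ (D - K) = -c0 := by
    have h1 : φ (D - x₀) = 0 := (memℓ D).mp hDℓ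
    have : D - K = (D - x₀) + ((-1 : ℝ) • (K - x₀)) := by rw [neg_one_smul]; abel
    rw [this, phi_add, phi_smul, h1, ← hc0def]; ring
  have hαD : φ (D - K) ≠ 0 := by rw [hαDval]; simpa using hc0
  have hdp : D - K = ((-c0) / φ (D - K)) • (D - K) := by
    rw [hαDval, div_self (by simpa using hc0), one_smul]
  -- the fixed vector u
  set eB : Pt := B - K with heB
  set β : ℝ := φ eB with hβ
  set γ : ℝ := φ v with hγ
  set u : Pt := β • v - γ • eB with hu
  -- distance formula for projected points
  have distproj : ∀ (X Y x' y' : Pt) (tX tY : ℝ), X = tX • v + B → Y = tY • v + B →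
      φ (X - K) ≠ 0 → φ (Y - K) ≠ 0 →
      x' - K = ((-c0) / φ (X - K)) • (X - K) → y' - K = ((-c0) / φ (Y - K)) • (Y - K) →
      dist x' y' = |c0| * |tX - tY| * ‖u‖ / (|φ (X - K)| * |φ (Y - K)|) := by
    intro X Y x' y' tX tY hX hY hαX hαY hx hy
    have hXK : X - K = tX • v + eB := by rw [hX, heB]; abel
    have hYK : Y - K = tY • v + eB := by rw [hY, heB]; abel
    have haX : φ (X - K) = tX * γ + β := by rw [hXK, phi_add, phi_smul, hβ, hγ]
    have haY : φ (Y - K) = tY * γ + β := by rw [hYK, phi_add, phi_smul, hβ, hγ]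
    have hαX' : tX * γ + β ≠ 0 := by rw [← haX]; exact hαX
    have hαY' : tY * γ + β ≠ 0 := by rw [← haY]; exact hαY
    have hdiff : x' - y' = ((-c0) * (tX - tY) / (φ (X - K) * φ (Y - K))) • u := by
      have : x' - y' = (x' - K) - (y' - K) := by abel
      rw [this, hx, hy, haX, haY, hXK, hYK, hu]
      have hαX'' : γ * tX + β ≠ 0 := by rw [mul_comm]; exact hαX'
      have hαY'' : γ * tY + β ≠ 0 := by rw [mul_comm]; exact hαY'
      match_scalars <;> field_simp <;> ring
    rw [dist_eq_norm, hdiff, norm_smul, Real.norm_eq_abs, abs_div, abs_mul, abs_mul, abs_neg]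
    ring
  -- the eight projected distances
  have d1 := distproj D B D b' tD tB htD htB hαD hαB hdp hbp
  have d2 := distproj D H D h' tD tH htD htH hαD hαH hdp hhp
  have d3 := distproj F C f c' tF tC htF htC hαF hαC hfp hcp
  have d4 := distproj F G f g' tF tG htF htG hαF hαG hfp hgp
  have d5 := distproj F B f b' tF tB htF htB hαF hαB hfp hbp
  have d6 := distproj F H f h' tF tH htF htH hαF hαH hfp hhp
  have d7 := distproj D C D c' tD tC htD htC hαD hαC hdp hcp
  have d8 := distproj D G D g' tD tG htD htG hαD hαG hdp hgp
  -- distances on the original line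
  have dd : ∀ (X Y : Pt) (tX tY : ℝ), X = tX • v + B → Y = tY • v + B →
      dist X Y = |tX - tY| * ‖v‖ := by
    intro X Y tX tY hX hY
    have : X - Y = (tX - tY) • v := by rw [hX, hY, sub_smul]; abel
    rw [dist_eq_norm, this, norm_smul, Real.norm_eq_abs]
  rw [dd D G tD tG htD htG, dd D C tD tC htD htC, dd F B tF tB htF htB,
      dd F H tF tH htF htH, dd F G tF tG htF htG, dd F C tF tC htF htC,
      dd D B tD tB htD htB, dd D H tD tH htD htH] at hinv
  have N : |tD - tG| * |tD - tC| * |tF - tB| * |tF - tH|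
        = |tF - tG| * |tF - tC| * |tD - tB| * |tD - tH| := by
    have h4 : (|tD - tG| * |tD - tC| * |tF - tB| * |tF - tH|) * ‖v‖ ^ 4
        = (|tF - tG| * |tF - tC| * |tD - tB| * |tD - tH|) * ‖v‖ ^ 4 := by
      linear_combination hinv
    exact mul_right_cancel₀ (pow_ne_zero 4 hnv) h4
  rw [d1, d2, d3, d4, d5, d6, d7, d8]
  have hAB : |φ (B - K)| ≠ 0 := abs_ne_zero.mpr hαB
  have hAH : |φ (H - K)| ≠ 0 := abs_ne_zero.mpr hαH
  have hAC : |φ (C - K)| ≠ 0 := abs_ne_zero.mpr hαC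
  have hAG : |φ (G - K)| ≠ 0 := abs_ne_zero.mpr hαG
  have hAD : |φ (D - K)| ≠ 0 := abs_ne_zero.mpr hαD
  have hAF : |φ (F - K)| ≠ 0 := abs_ne_zero.mpr hαF
  field_simp
  linear_combination (-(‖u‖ ^ 4)) * N
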